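/- With the same setup as the pairwise relaxed partitions above (labels ℓ : P → {1,2,3}, directions D : P → {L,R}, and for each pair {i,j} a prefix/suffix partition P = P^{ij}_i ∪ P^{ij}_j whose parts left-like their sites relative to the pair): if P^{12}_2 ∩ P^{23}_2 ≠ ∅, then (a) every v ∈ P^{12}_2 ∩ P^{23}_2 satisfies ℓ(v) = 2 or D(v) = R; (b) every v ∈ P^{12}_1 satisfies ℓ(v) = 1 or D(v) = R; and (c) every v ∈ P^{23}_3 satisfies ℓ(v) = 3 or D(v) = R. -/
import Mathlib


/-- The direction (left or right) from which a shortest path enters the separator path. -/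
inductive Dir | L | R
deriving DecidableEq

/-- `v` left-likes site `i` relative to the pair `{i, j}`: its true site is `i`, or its
shortest path enters from the right, or its true site is outside the pair. -/
def leftLikes {P : Type} (ℓ : P → Fin 3) (D : P → Dir) (i j : Fin 3) (v : P) : Prop :=
  ℓ v = i ∨ D v = Dir.R ∨ (ℓ v ≠ i ∧ ℓ v ≠ j)

/-- Combining pairwise relaxed partitions: in the case `P^{12}_2 ∩ P^{23}_2 ≠ ∅`, the middle
part `P^{12}_2 ∩ P^{23}_2` is correct for site `2`, and `P^{12}_1`, `P^{23}_3` are correct for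
sites `1` and `3` respectively. (Sites `1,2,3` are represented by `0,1,2 : Fin 3`.) -/
theorem stmt11 {P : Type} [LinearOrder P]
    (ℓ : P → Fin 3) (D : P → Dir)
    (A12 B12 A23 B23 : Set P)
    (h12u : A12 ∪ B12 = Set.univ) (h12d : Disjoint A12 B12)
    (h12p : ∀ a b : P, a ≤ b → b ∈ A12 → a ∈ A12)
    (h12A : ∀ v ∈ A12, leftLikes ℓ D 0 1 v) (h12B : ∀ v ∈ B12, leftLikes ℓ D 1 0 v)
    (h23u : A23 ∪ B23 = Set.univ) (h23d : Disjoint A23 B23)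
    (h23p : ∀ a b : P, a ≤ b → b ∈ A23 → a ∈ A23)
    (h23A : ∀ v ∈ A23, leftLikes ℓ D 1 2 v) (h23B : ∀ v ∈ B23, leftLikes ℓ D 2 1 v)
    (hne : (B12 ∩ A23).Nonempty) :
    (∀ v ∈ B12 ∩ A23, ℓ v = 1 ∨ D v = Dir.R) ∧
      (∀ v ∈ A12, ℓ v = 0 ∨ D v = Dir.R) ∧
      (∀ v ∈ B23, ℓ v = 2 ∨ D v = Dir.R) := by
  obtain ⟨w, hwB, hwA⟩ := hne
  refine ⟨?_, ?_, ?_⟩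
  · rintro v ⟨hvB, hvA⟩
    have h1 := h12B v hvB
    have h2 := h23A v hvA
    unfold leftLikes at h1 h2
    rcases h1 with h | h | ⟨h, h'⟩ <;> rcases h2 with g | g | ⟨g, g'⟩ <;> simp_all <;> omega
  · intro v hv
    have hvA23 : v ∈ A23 := by
      have hle : v ≤ w := by
        by_contra hlt
        exact (h12d.ne_of_mem (h12p w v (le_of_not_ge hlt) hv) hwB) rfl
      exact h23p v w hle hwA
    have h1 := h12A v hv
    have h2 := h23A v hvA23
    unfold leftLikes at h1 h2
    rcases h1 with h | h | ⟨h, h'⟩ <;> rcases h2 with g | g | ⟨g, g'⟩ <;> simp_all <;> omega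
  · intro v hv
    have hvB12 : v ∈ B12 := by
      have hle : w ≤ v := by
        by_contra hlt
        exact (h23d.ne_of_mem (h23p v w (le_of_not_ge hlt) hwA) hv) rfl
      rcases (Set.eq_univ_iff_forall.mp h12u v : v ∈ A12 ∪ B12) with h | h
      · exact absurd rfl (h12d.ne_of_mem (h12p w v hle h) hwB)
      · exact h
    have h1 := h12B v hvB12
    have h2 := h23B v hv
    unfold leftLikes at h1 h2
    rcases h1 with h | h | ⟨h, h'⟩ <;> rcases h2 with g | g | ⟨g, g'⟩ <;> simp_all <;> omega
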